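/- Let (X, Y) have the bivariate normal distribution with mean (μm, μM) and covariance [[σm², c], [c, σM²]], and let ε be an independent N(0, σn²) random variable with σn > 0. Set σ̃ = √(σm² + σn²), u_n(x) = c(x − μm)/σ̃² + μM, and s_n = √(σM² − c²/σ̃²). Then the conditional distribution of Y' = X + ε given the event {Y ≤ f_*} has density x ↦ Φ((f_* − u_n(x))/s_n) · φ((x − μm)/σ̃) / (σ̃ Φ((f_* − μM)/σM)); i.e., for every Borel set A ⊆ ℝ, P(X + ε ∈ A and Y ≤ f_*) / P(Y ≤ f_*) equals the integral of this density over A. -/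

import Mathlib

open MeasureTheory Real Set Matrix

/-- The standard normal probability density function. -/
noncomputable def stdPdf (t : ℝ) : ℝ := (Real.sqrt (2 * π))⁻¹ * Real.exp (-t ^ 2 / 2)

/-- The standard normal cumulative distribution function. -/
noncomputable def stdCdf (t : ℝ) : ℝ := ∫ u in Iic t, stdPdf u

/-- The bivariate normal density on `ℝ²` with mean vector `(μm, μM)` and covariance matrix
`Σ = [[σm², c], [c, σM²]]`. -/
noncomputable def bivDensity (μm μM σm σM c : ℝ) (x y : ℝ) : ℝ :=
  (2 * π)⁻¹ * (Real.sqrt (!![σm ^ 2, c; c, σM ^ 2] : Matrix (Fin 2) (Fin 2) ℝ).det)⁻¹ *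
    Real.exp (-(1 / 2) *
      ((![x, y] - ![μm, μM]) ⬝ᵥ ((!![σm ^ 2, c; c, σM ^ 2] : Matrix (Fin 2) (Fin 2) ℝ)⁻¹ *ᵥ
        (![x, y] - ![μm, μM]))))

/-- `σ̃ = √(σm² + σn²)`. -/
noncomputable def sigmaTilde (σm σn : ℝ) : ℝ := Real.sqrt (σm ^ 2 + σn ^ 2)

/-- `u_n(x) = c(x − μm)/σ̃² + μM`. -/
noncomputable def condMeanNoisy (μm μM σm σn c x : ℝ) : ℝ :=
  c * (x - μm) / sigmaTilde σm σn ^ 2 + μM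

/-- `s_n = √(σM² − c²/σ̃²)`. -/
noncomputable def condSdNoisy (σm σM σn c : ℝ) : ℝ :=
  Real.sqrt (σM ^ 2 - c ^ 2 / sigmaTilde σm σn ^ 2)

section Aux
open ProbabilityTheory
open scoped ENNReal NNReal

noncomputable def nd (σ z : ℝ) : ℝ := stdPdf (z / σ) / σ
lemma nd_def (σ z : ℝ) : nd σ z = (Real.sqrt (2 * π))⁻¹ * Real.exp (-(z/σ) ^ 2 / 2) / σ := rfl

lemma stdPdf_pos (x : ℝ) : 0 < stdPdf x := by unfold stdPdf; positivity
lemma stdPdf_nonneg (x : ℝ) : 0 ≤ stdPdf x := (stdPdf_pos x).le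
@[fun_prop] lemma continuous_stdPdf : Continuous stdPdf := by unfold stdPdf; fun_prop
@[fun_prop] lemma continuous_nd (σ : ℝ) : Continuous (nd σ) :=
  (continuous_stdPdf.comp (continuous_id.div_const σ)).div_const σ
@[fun_prop] lemma measurable_nd (σ : ℝ) : Measurable (nd σ) := (continuous_nd σ).measurable
lemma nd_nonneg {σ : ℝ} (hσ : 0 < σ) (z : ℝ) : 0 ≤ nd σ z :=
  div_nonneg (stdPdf_nonneg _) hσ.le

lemma nd_eq_gaussianPDFReal {σ : ℝ} (hσ : 0 < σ) (m x : ℝ) :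
    nd σ (x - m) = gaussianPDFReal m (σ^2).toNNReal x := by
  rw [nd_def, gaussianPDFReal]
  have h2 : ((σ^2).toNNReal : ℝ) = σ^2 := Real.coe_toNNReal _ (sq_nonneg σ)
  rw [h2]
  have hs : Real.sqrt (2*π*σ^2) = Real.sqrt (2*π) * σ := by
    rw [Real.sqrt_mul (by positivity), Real.sqrt_sq hσ.le]
  rw [hs]
  have : -((x-m)/σ)^2/2 = -(x-m)^2/(2*σ^2) := by rw [div_pow]; ring
  rw [this, mul_inv]
  ring

lemma nd_fun_eq {σ : ℝ} (hσ : 0 < σ) (m : ℝ) :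
    (fun x => nd σ (x - m)) = gaussianPDFReal m (σ^2).toNNReal :=
  funext fun x => nd_eq_gaussianPDFReal hσ m x

lemma toNNReal_sq_ne_zero {σ : ℝ} (hσ : 0 < σ) : (σ^2).toNNReal ≠ 0 := by
  simp [Real.toNNReal_eq_zero, not_le]
  positivity

lemma integrable_nd {σ : ℝ} (hσ : 0 < σ) (m : ℝ) : Integrable (fun x => nd σ (x - m)) := by
  rw [nd_fun_eq hσ m]; exact integrable_gaussianPDFReal _ _

lemma integral_nd {σ : ℝ} (hσ : 0 < σ) (m : ℝ) : ∫ x, nd σ (x - m) = 1 := by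
  rw [nd_fun_eq hσ m]; exact integral_gaussianPDFReal_eq_one m (toNNReal_sq_ne_zero hσ)

lemma lintegral_nd {σ : ℝ} (hσ : 0 < σ) (m : ℝ) :
    ∫⁻ x, ENNReal.ofReal (nd σ (x - m)) = 1 := by
  simp_rw [nd_eq_gaussianPDFReal hσ m]
  exact lintegral_gaussianPDFReal_eq_one m (toNNReal_sq_ne_zero hσ)

lemma setIntegral_nd {s : ℝ} (hs : 0 < s) (m f : ℝ) :
    ∫ y in Iic f, nd s (y - m) = stdCdf ((f - m)/s) := by
  have key : ∀ u : ℝ, (Iic f).indicator (fun y => nd s (y - m)) (s*u + m)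
      = (Iic ((f - m)/s)).indicator (fun u => stdPdf u / s) u := by
    intro u
    rw [Set.indicator_apply, Set.indicator_apply]
    have hmem : s*u + m ∈ Iic f ↔ u ∈ Iic ((f - m)/s) := by
      simp only [mem_Iic, le_div_iff₀ hs]
      constructor <;> intro h <;> nlinarith
    have hval : nd s (s*u + m - m) = stdPdf u / s := by
      rw [show s*u + m - m = s*u by ring, nd, mul_div_cancel_left₀ _ hs.ne']
    by_cases h : s*u + m ∈ Iic f
    · rw [if_pos h, if_pos (hmem.1 h), hval]
    · rw [if_neg h, if_neg (fun hh => h (hmem.2 hh))]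
  have e1 : (∫ y in Iic f, nd s (y - m))
      = ∫ y, (Iic f).indicator (fun y => nd s (y - m)) y :=
    (integral_indicator measurableSet_Iic).symm
  have e2 : (∫ x, (Iic f).indicator (fun y => nd s (y - m)) (x + m))
      = ∫ y, (Iic f).indicator (fun y => nd s (y - m)) y :=
    integral_add_right_eq_self _ m
  have e3 := MeasureTheory.Measure.integral_comp_mul_left
      (fun x => (Iic f).indicator (fun y => nd s (y - m)) (x + m)) s
  have e4 : (∫ u, (Iic f).indicator (fun y => nd s (y - m)) (s*u + m))
      = ∫ u, (Iic ((f - m)/s)).indicator (fun u => stdPdf u / s) u := by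
    exact integral_congr_ae (ae_of_all _ key)
  have : (∫ y in Iic f, nd s (y - m)) = |s| • ∫ u,
      (Iic ((f - m)/s)).indicator (fun u => stdPdf u / s) u := by
    rw [e1, ← e2, ← e4]
    rw [e3, smul_smul, ← abs_mul, mul_inv_cancel₀ hs.ne', abs_one, one_smul]
  rw [this, integral_indicator measurableSet_Iic, abs_of_pos hs, integral_div, smul_eq_mul,
    stdCdf, mul_div_cancel₀ _ hs.ne']

lemma setLIntegral_nd {s : ℝ} (hs : 0 < s) (m f : ℝ) :
    ∫⁻ y in Iic f, ENNReal.ofReal (nd s (y - m)) = ENNReal.ofReal (stdCdf ((f - m)/s)) := by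
  rw [← setIntegral_nd hs m f, ← ofReal_integral_eq_lintegral_ofReal
    ((integrable_nd hs m).restrict) (ae_of_all _ fun y => nd_nonneg hs _)]

lemma stdCdf_nonneg (t : ℝ) : 0 ≤ stdCdf t := integral_nonneg fun u => stdPdf_nonneg u

lemma integrable_stdPdf : Integrable stdPdf := by
  have := integrable_nd one_pos 0
  simpa [nd] using this

lemma stdCdf_le_one (t : ℝ) : stdCdf t ≤ 1 := by
  have h1 : ∫ x, nd 1 (x - 0) = 1 := integral_nd one_pos 0
  simp only [nd, sub_zero, div_one] at h1
  rw [stdCdf, ← h1]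
  exact setIntegral_le_integral integrable_stdPdf (ae_of_all _ fun u => stdPdf_nonneg u)

lemma stdCdf_pos (t : ℝ) : 0 < stdCdf t := by
  rw [stdCdf]
  rw [setIntegral_pos_iff_support_of_nonneg_ae (ae_of_all _ fun u => stdPdf_nonneg u)
    integrable_stdPdf.integrableOn]
  have : Function.support stdPdf = univ := by
    ext x; simp [Function.mem_support, (stdPdf_pos x).ne']
  rw [this, univ_inter]
  simp [Real.volume_Iic]

lemma nd_mul_nd_of {σ1 σ2 τ1 τ2 z1 z2 w1 w2 : ℝ}
    (hσ : σ1*σ2 = τ1*τ2)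
    (hz : (z1/σ1)^2+(z2/σ2)^2 = (w1/τ1)^2+(w2/τ2)^2) :
    nd σ1 z1 * nd σ2 z2 = nd τ1 w1 * nd τ2 w2 := by
  have e : ∀ s1 s2 y1 y2 : ℝ, nd s1 y1 * nd s2 y2 =
      (Real.sqrt (2*π))⁻¹ * (Real.sqrt (2*π))⁻¹ / (s1*s2) *
        Real.exp (-((y1/s1)^2 + (y2/s2)^2)/2) := by
    intro s1 s2 y1 y2
    rw [nd_def, nd_def, show -((y1/s1)^2 + (y2/s2)^2)/2 = -(y1/s1)^2/2 + -(y2/s2)^2/2 by ring,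
      Real.exp_add]
    ring
  rw [e, e, hσ, hz]

lemma nd_mul_nd {a b : ℝ} (ha : 0 < a) (hb : 0 < b) (p q t : ℝ) :
    nd a (t - p) * nd b (q - t) =
      nd (Real.sqrt (a^2+b^2)) (q - p) *
        nd (a*b/Real.sqrt (a^2+b^2)) (t - (b^2*p + a^2*q)/(a^2+b^2)) := by
  have hab : (0:ℝ) < a^2 + b^2 := by positivity
  have hs : (0:ℝ) < Real.sqrt (a^2+b^2) := Real.sqrt_pos.2 hab
  have hs2 : Real.sqrt (a^2+b^2)^2 = a^2+b^2 := Real.sq_sqrt hab.le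
  apply nd_mul_nd_of
  · field_simp
  · rw [div_pow, div_pow, div_pow, div_pow, hs2, div_pow, hs2]
    field_simp
    ring

lemma nd_refactor {σ1 σ2 c : ℝ} (h1 : 0 < σ1) (h2 : 0 < σ2) (hc : c^2 < σ1^2*σ2^2) (dx dy : ℝ) :
    nd σ1 dx * nd (Real.sqrt (σ2^2 - c^2/σ1^2)) (dy - c/σ1^2*dx)
      = nd σ2 dy * nd (Real.sqrt (σ1^2 - c^2/σ2^2)) (dx - c/σ2^2*dy) := by
  have hu : (0:ℝ) < σ2^2 - c^2/σ1^2 := by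
    rw [sub_pos, div_lt_iff₀ (by positivity)]; nlinarith
  have hv : (0:ℝ) < σ1^2 - c^2/σ2^2 := by
    rw [sub_pos, div_lt_iff₀ (by positivity)]; nlinarith
  have hu2 : Real.sqrt (σ2^2 - c^2/σ1^2)^2 = σ2^2 - c^2/σ1^2 := Real.sq_sqrt hu.le
  have hv2 : Real.sqrt (σ1^2 - c^2/σ2^2)^2 = σ1^2 - c^2/σ2^2 := Real.sq_sqrt hv.le
  have hsu : (0:ℝ) < Real.sqrt (σ2^2 - c^2/σ1^2) := Real.sqrt_pos.2 hu
  have hsv : (0:ℝ) < Real.sqrt (σ1^2 - c^2/σ2^2) := Real.sqrt_pos.2 hv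
  apply nd_mul_nd_of
  · rw [show σ1 * Real.sqrt (σ2^2 - c^2/σ1^2) = Real.sqrt (σ1^2 * (σ2^2 - c^2/σ1^2)) by
      rw [Real.sqrt_mul (by positivity), Real.sqrt_sq h1.le],
      show σ2 * Real.sqrt (σ1^2 - c^2/σ2^2) = Real.sqrt (σ2^2 * (σ1^2 - c^2/σ2^2)) by
      rw [Real.sqrt_mul (by positivity), Real.sqrt_sq h2.le]]
    congr 1
    field_simp
  · rw [div_pow, div_pow, div_pow, div_pow, hu2, hv2]
    have hD : σ1^2*σ2^2 - c^2 ≠ 0 := by nlinarith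
    rw [show σ2^2 - c^2/σ1^2 = (σ1^2*σ2^2 - c^2)/σ1^2 by field_simp; try ring;,
        show σ1^2 - c^2/σ2^2 = (σ1^2*σ2^2 - c^2)/σ2^2 by field_simp; try ring;]
    field_simp
    ring

lemma nd_mul_nd_eq (s1 s2 y1 y2 : ℝ) : nd s1 y1 * nd s2 y2 =
    (Real.sqrt (2*π))⁻¹ * (Real.sqrt (2*π))⁻¹ / (s1*s2) *
      Real.exp (-((y1/s1)^2 + (y2/s2)^2)/2) := by
  rw [nd_def, nd_def, show -((y1/s1)^2 + (y2/s2)^2)/2 = -(y1/s1)^2/2 + -(y2/s2)^2/2 by ring,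
    Real.exp_add]
  ring

lemma bivDensity_eq (μ1 μ2 σ1 σ2 c : ℝ) (hD : σ1^2*σ2^2 - c^2 ≠ 0) (x y : ℝ) :
    bivDensity μ1 μ2 σ1 σ2 c x y =
      (2 * π)⁻¹ * (Real.sqrt (σ1^2*σ2^2 - c^2))⁻¹ *
        Real.exp (-(σ2^2*(x-μ1)^2 - 2*c*(x-μ1)*(y-μ2) + σ1^2*(y-μ2)^2) / (2*(σ1^2*σ2^2 - c^2))) := by
  have hdet : (!![σ1 ^ 2, c; c, σ2 ^ 2] : Matrix (Fin 2) (Fin 2) ℝ).det = σ1^2*σ2^2 - c^2 := by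
    simp [Matrix.det_fin_two_of]; ring
  have hinv : (!![σ1 ^ 2, c; c, σ2 ^ 2] : Matrix (Fin 2) (Fin 2) ℝ)⁻¹ =
      (σ1^2*σ2^2 - c^2)⁻¹ • !![σ2 ^ 2, -c; -c, σ1 ^ 2] := by
    rw [Matrix.inv_def, hdet, Matrix.adjugate_fin_two_of, Ring.inverse_eq_inv]
  rw [bivDensity, hdet, hinv]
  congr 1
  have hv : (![x, y] - ![μ1, μ2] : Fin 2 → ℝ) = ![x - μ1, y - μ2] := by
    funext i; fin_cases i <;> simp
  rw [hv]
  simp only [Matrix.smul_mulVec, Matrix.smul_apply, Matrix.mulVec, dotProduct, Fin.sum_univ_two,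
    Matrix.cons_val_zero, Matrix.cons_val_one, Matrix.head_cons, Pi.smul_apply, smul_eq_mul,
    Matrix.of_apply, Matrix.cons_val', Matrix.head_fin_const, Matrix.empty_val',
    Matrix.cons_val_fin_one]
  congr 1
  field_simp
  ring

lemma bivDensity_factor {σ1 σ2 c : ℝ} (h1 : 0 < σ1) (h2 : 0 < σ2) (hc : c^2 < σ1^2*σ2^2)
    (μ1 μ2 x y : ℝ) :
    bivDensity μ1 μ2 σ1 σ2 c x y =
      nd σ1 (x - μ1) * nd (Real.sqrt (σ2^2 - c^2/σ1^2)) ((y - μ2) - c/σ1^2*(x - μ1)) := by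
  have hD : (0:ℝ) < σ1^2*σ2^2 - c^2 := by nlinarith
  have hu : (0:ℝ) < σ2^2 - c^2/σ1^2 := by
    rw [sub_pos, div_lt_iff₀ (by positivity)]; nlinarith
  have hu2 : Real.sqrt (σ2^2 - c^2/σ1^2)^2 = σ2^2 - c^2/σ1^2 := Real.sq_sqrt hu.le
  have hsu : (0:ℝ) < Real.sqrt (σ2^2 - c^2/σ1^2) := Real.sqrt_pos.2 hu
  rw [bivDensity_eq _ _ _ _ _ hD.ne' x y, nd_mul_nd_eq]
  have hconst : (Real.sqrt (2*π))⁻¹ * (Real.sqrt (2*π))⁻¹ / (σ1 * Real.sqrt (σ2^2 - c^2/σ1^2))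
      = (2 * π)⁻¹ * (Real.sqrt (σ1^2*σ2^2 - c^2))⁻¹ := by
    rw [show σ1 * Real.sqrt (σ2^2 - c^2/σ1^2) = Real.sqrt (σ1^2*σ2^2 - c^2) by
        rw [← Real.sqrt_sq h1.le, ← Real.sqrt_mul (by positivity)]
        congr 1
        field_simp
        simp only [Real.sqrt_sq h1.le]]
    rw [div_eq_mul_inv, ← mul_inv, Real.mul_self_sqrt Real.two_pi_pos.le]
  rw [hconst]
  congr 2
  rw [div_pow, div_pow, hu2,
    show σ2^2 - c^2/σ1^2 = (σ1^2*σ2^2 - c^2)/σ1^2 by field_simp; try ring]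
  field_simp [hD.ne']
  have hD2 : σ2^2*σ1^2 - c^2 ≠ 0 := by nlinarith
  field_simp
  ring

-- convolution step (statement only for now)
lemma lintegral_nd_mul_nd {a b : ℝ} (ha : 0 < a) (hb : 0 < b) (p q : ℝ) :
    ∫⁻ t, ENNReal.ofReal (nd a (t - p) * nd b (q - t))
      = ENNReal.ofReal (nd (Real.sqrt (a^2+b^2)) (q - p)) := by
  have hab : (0:ℝ) < a^2 + b^2 := by positivity
  have hs : (0:ℝ) < Real.sqrt (a^2+b^2) := Real.sqrt_pos.2 hab
  have hr : (0:ℝ) < a*b/Real.sqrt (a^2+b^2) := by positivity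
  simp_rw [nd_mul_nd ha hb p q, ENNReal.ofReal_mul (nd_nonneg hs _)]
  rw [lintegral_const_mul _ (by fun_prop :
      Measurable fun t => ENNReal.ofReal (nd (a*b/Real.sqrt (a^2+b^2)) (t - (b^2*p + a^2*q)/(a^2+b^2)))),
    lintegral_nd hr, mul_one]

lemma step_conv {s' σn : ℝ} (hs' : 0 < s') (hσn : 0 < σn) (ay : ℝ) {A : Set ℝ}
    (hA : MeasurableSet A) :
    ∫⁻ t, ENNReal.ofReal (nd s' (t - ay)) * ∫⁻ x in A, ENNReal.ofReal (nd σn (x - t))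
      = ∫⁻ x in A, ENNReal.ofReal (nd (Real.sqrt (s'^2+σn^2)) (x - ay)) := by
  have hm : Measurable (Function.uncurry fun t x : ℝ =>
      ENNReal.ofReal (nd s' (t - ay) * nd σn (x - t))) := by
    apply Measurable.ennreal_ofReal
    apply Continuous.measurable
    exact ((continuous_nd s').comp ((continuous_fst).sub continuous_const)).mul
      ((continuous_nd σn).comp ((continuous_snd).sub continuous_fst))
  calc ∫⁻ t, ENNReal.ofReal (nd s' (t - ay)) * ∫⁻ x in A, ENNReal.ofReal (nd σn (x - t))
      = ∫⁻ t, ∫⁻ x in A, ENNReal.ofReal (nd s' (t - ay) * nd σn (x - t)) := by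
        congr 1; funext t
        rw [← lintegral_const_mul _ (by fun_prop :
          Measurable fun x => ENNReal.ofReal (nd σn (x - t)))]
        congr 1; funext x
        rw [← ENNReal.ofReal_mul (nd_nonneg hs' _)]
    _ = ∫⁻ x in A, ∫⁻ t, ENNReal.ofReal (nd s' (t - ay) * nd σn (x - t)) := by
        exact lintegral_lintegral_swap hm.aemeasurable
    _ = ∫⁻ x in A, ENNReal.ofReal (nd (Real.sqrt (s'^2+σn^2)) (x - ay)) := by
        apply lintegral_congr; intro x
        exact lintegral_nd_mul_nd hs' hσn ay x

lemma bivDensity_factor' {σ1 σ2 c : ℝ} (h1 : 0 < σ1) (h2 : 0 < σ2) (hc : c^2 < σ1^2*σ2^2)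
    (μ1 μ2 x y : ℝ) :
    bivDensity μ1 μ2 σ1 σ2 c x y =
      nd σ2 (y - μ2) * nd (Real.sqrt (σ1^2 - c^2/σ2^2)) (x - (μ1 + c/σ2^2*(y - μ2))) := by
  rw [bivDensity_factor h1 h2 hc, nd_refactor h1 h2 hc, sub_sub]

lemma indicator_one_mul {f : ℝ} (y : ℝ) (K : ℝ≥0∞) :
    (Iic f).indicator (fun _ => (1:ℝ≥0∞)) y * K = (Iic f).indicator (fun _ => K) y := by
  by_cases hy : y ∈ Iic f <;> simp [hy]

lemma den_lemma {σ1 σ2 c : ℝ} (h1 : 0 < σ1) (h2 : 0 < σ2) (hc : c^2 < σ1^2*σ2^2)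
    (μ1 μ2 f : ℝ) :
    (volume : Measure (ℝ × ℝ)).withDensity
      (fun v => ENNReal.ofReal (bivDensity μ1 μ2 σ1 σ2 c v.1 v.2)) {p : ℝ × ℝ | p.2 ≤ f}
      = ENNReal.ofReal (stdCdf ((f - μ2)/σ2)) := by
  have hs'pos : (0:ℝ) < σ1^2 - c^2/σ2^2 := by
    rw [sub_pos, div_lt_iff₀ (by positivity)]; nlinarith
  have hs' : (0:ℝ) < Real.sqrt (σ1^2 - c^2/σ2^2) := Real.sqrt_pos.2 hs'pos
  have hdens : (fun v : ℝ × ℝ => ENNReal.ofReal (bivDensity μ1 μ2 σ1 σ2 c v.1 v.2))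
      = fun v => ENNReal.ofReal (nd σ2 (v.2 - μ2) *
          nd (Real.sqrt (σ1^2 - c^2/σ2^2)) (v.1 - (μ1 + c/σ2^2*(v.2 - μ2)))) :=
    funext fun v => by rw [bivDensity_factor' h1 h2 hc]
  have hset : {p : ℝ × ℝ | p.2 ≤ f} = (univ : Set ℝ) ×ˢ Iic f := by
    ext p; simp
  rw [hdens, hset, withDensity_apply _ (MeasurableSet.univ.prod measurableSet_Iic),
    Measure.volume_eq_prod, ← Measure.prod_restrict, Measure.restrict_univ]
  rw [lintegral_prod_symm _ (by fun_prop)]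
  have hinner : ∀ y : ℝ, (∫⁻ x, ENNReal.ofReal (nd σ2 (y - μ2) *
      nd (Real.sqrt (σ1^2 - c^2/σ2^2)) (x - (μ1 + c/σ2^2*(y - μ2)))))
      = ENNReal.ofReal (nd σ2 (y - μ2)) := by
    intro y
    simp_rw [ENNReal.ofReal_mul (nd_nonneg h2 _)]
    rw [lintegral_const_mul _ (by fun_prop :
      Measurable fun x => ENNReal.ofReal (nd (Real.sqrt (σ1^2 - c^2/σ2^2))
        (x - (μ1 + c/σ2^2*(y - μ2))))), lintegral_nd hs', mul_one]
  calc (∫⁻ y in Iic f, ∫⁻ x, ENNReal.ofReal (nd σ2 (y - μ2) *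
          nd (Real.sqrt (σ1^2 - c^2/σ2^2)) (x - (μ1 + c/σ2^2*(y - μ2)))))
      = ∫⁻ y in Iic f, ENNReal.ofReal (nd σ2 (y - μ2)) := by
        apply lintegral_congr; intro y; exact hinner y
    _ = ENNReal.ofReal (stdCdf ((f - μ2)/σ2)) := setLIntegral_nd h2 μ2 f

lemma slice_lemma {σn : ℝ} (hσn : 0 < σn) (f : ℝ) {A : Set ℝ} (hA : MeasurableSet A)
    (p : ℝ × ℝ) :
    gaussianReal 0 (σn^2).toNNReal
        (Prod.mk p ⁻¹' {q : (ℝ × ℝ) × ℝ | q.1.1 + q.2 ∈ A ∧ q.1.2 ≤ f})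
      = (Iic f).indicator (fun _ => (1:ℝ≥0∞)) p.2 *
          ∫⁻ x in A, ENNReal.ofReal (nd σn (x - p.1)) := by
  have hv : ((σn^2).toNNReal) ≠ 0 := toNNReal_sq_ne_zero hσn
  by_cases hp : p.2 ≤ f
  · have hpre : Prod.mk p ⁻¹' {q : (ℝ × ℝ) × ℝ | q.1.1 + q.2 ∈ A ∧ q.1.2 ≤ f}
        = (fun e => e + p.1) ⁻¹' A := by
      ext e; simp [hp, add_comm]
    rw [hpre, Set.indicator_of_mem (Set.mem_Iic.2 hp), one_mul]
    rw [← Measure.map_apply (measurable_add_const p.1) hA]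
    rw [gaussianReal_map_add_const, zero_add]
    rw [gaussianReal_of_var_ne_zero _ hv, withDensity_apply _ hA]
    apply setLIntegral_congr_fun hA
    intro x _
    show ENNReal.ofReal (gaussianPDFReal p.1 (σn^2).toNNReal x) = _
    rw [← nd_eq_gaussianPDFReal hσn]
  · have hpre : Prod.mk p ⁻¹' {q : (ℝ × ℝ) × ℝ | q.1.1 + q.2 ∈ A ∧ q.1.2 ≤ f} = ∅ := by
      ext e; simp [hp]
    rw [hpre, measure_empty, Set.indicator_of_notMem (by simpa using hp), zero_mul]

lemma num_lemma {σ1 σ2 c σn : ℝ} (h1 : 0 < σ1) (h2 : 0 < σ2) (hσn : 0 < σn)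
    (hc : c^2 < σ1^2*σ2^2) (μ1 μ2 f : ℝ) {A : Set ℝ} (hA : MeasurableSet A) :
    (((volume : Measure (ℝ × ℝ)).withDensity
        (fun v => ENNReal.ofReal (bivDensity μ1 μ2 σ1 σ2 c v.1 v.2))).prod
      (gaussianReal 0 (σn^2).toNNReal)) {q : (ℝ × ℝ) × ℝ | q.1.1 + q.2 ∈ A ∧ q.1.2 ≤ f}
      = ∫⁻ x in A, ENNReal.ofReal (nd (Real.sqrt (σ1^2 + σn^2)) (x - μ1) *
          stdCdf ((f - (c * (x - μ1) / Real.sqrt (σ1^2 + σn^2) ^ 2 + μ2)) /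
            Real.sqrt (σ2^2 - c^2 / Real.sqrt (σ1^2 + σn^2) ^ 2))) := by
  have hT : (0:ℝ) < Real.sqrt (σ1^2 + σn^2) := Real.sqrt_pos.2 (by positivity)
  have hT2 : Real.sqrt (σ1^2 + σn^2)^2 = σ1^2 + σn^2 := Real.sq_sqrt (by positivity)
  set T := Real.sqrt (σ1^2 + σn^2) with hTdef
  have hcT : c^2 < σ2^2 * T^2 := by rw [hT2]; nlinarith [sq_nonneg σn]
  have hs'pos : (0:ℝ) < σ1^2 - c^2/σ2^2 := by
    rw [sub_pos, div_lt_iff₀ (by positivity)]; nlinarith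
  have hs' : (0:ℝ) < Real.sqrt (σ1^2 - c^2/σ2^2) := Real.sqrt_pos.2 hs'pos
  have hs'2 : Real.sqrt (σ1^2 - c^2/σ2^2)^2 = σ1^2 - c^2/σ2^2 := Real.sq_sqrt hs'pos.le
  have hsnpos : (0:ℝ) < σ2^2 - c^2/T^2 := by
    rw [sub_pos, div_lt_iff₀ (by positivity)]; nlinarith
  have hsn : (0:ℝ) < Real.sqrt (σ2^2 - c^2/T^2) := Real.sqrt_pos.2 hsnpos
  have hSm : MeasurableSet {q : (ℝ × ℝ) × ℝ | q.1.1 + q.2 ∈ A ∧ q.1.2 ≤ f} :=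
    ((measurable_fst.fst.add measurable_snd) hA).inter (measurable_fst.snd measurableSet_Iic)
  have hJ : Measurable (fun t : ℝ => ∫⁻ x in A, ENNReal.ofReal (nd σn (x - t))) :=
    Measurable.lintegral_prod_right'
      (f := fun q : ℝ × ℝ => ENNReal.ofReal (nd σn (q.2 - q.1))) (by fun_prop)
  rw [Measure.prod_apply hSm, lintegral_congr (slice_lemma hσn f hA)]
  have hdens : (fun v : ℝ × ℝ => ENNReal.ofReal (bivDensity μ1 μ2 σ1 σ2 c v.1 v.2))
      = fun v => ENNReal.ofReal (nd σ2 (v.2 - μ2) *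
          nd (Real.sqrt (σ1^2 - c^2/σ2^2)) (v.1 - (μ1 + c/σ2^2*(v.2 - μ2)))) :=
    funext fun v => by rw [bivDensity_factor' h1 h2 hc]
  have hF : Measurable fun p : ℝ × ℝ => (Iic f).indicator (fun _ => (1:ℝ≥0∞)) p.2 *
      ∫⁻ x in A, ENNReal.ofReal (nd σn (x - p.1)) :=
    ((measurable_const.indicator measurableSet_Iic).comp measurable_snd).mul
      (hJ.comp measurable_fst)
  have hGm : Measurable fun v : ℝ × ℝ => ENNReal.ofReal (nd σ2 (v.2 - μ2) *
      nd (Real.sqrt (σ1^2 - c^2/σ2^2)) (v.1 - (μ1 + c/σ2^2*(v.2 - μ2)))) := by fun_prop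
  have hprod : Measurable fun v : ℝ × ℝ => (ENNReal.ofReal (nd σ2 (v.2 - μ2) *
        nd (Real.sqrt (σ1^2 - c^2/σ2^2)) (v.1 - (μ1 + c/σ2^2*(v.2 - μ2))))) *
      ((Iic f).indicator (fun _ => (1:ℝ≥0∞)) v.2 *
        ∫⁻ x in A, ENNReal.ofReal (nd σn (x - v.1))) := hGm.mul hF
  rw [hdens, lintegral_withDensity_eq_lintegral_mul _ hGm hF]
  simp only [Pi.mul_apply]
  rw [Measure.volume_eq_prod, lintegral_prod_symm _ hprod.aemeasurable]
  have step5 : ∀ y : ℝ,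
      (∫⁻ t, ENNReal.ofReal (nd σ2 (y - μ2) *
          nd (Real.sqrt (σ1^2 - c^2/σ2^2)) (t - (μ1 + c/σ2^2*(y - μ2)))) *
        ((Iic f).indicator (fun _ => (1:ℝ≥0∞)) y * ∫⁻ x in A, ENNReal.ofReal (nd σn (x - t))))
      = (Iic f).indicator (fun y => ∫⁻ x in A,
          ENNReal.ofReal (nd T (x - μ1) *
            nd (Real.sqrt (σ2^2 - c^2/T^2)) ((y - μ2) - c/T^2*(x - μ1)))) y := by
    intro y
    have e1 : ∀ t : ℝ, ENNReal.ofReal (nd σ2 (y - μ2) *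
          nd (Real.sqrt (σ1^2 - c^2/σ2^2)) (t - (μ1 + c/σ2^2*(y - μ2)))) *
        ((Iic f).indicator (fun _ => (1:ℝ≥0∞)) y * ∫⁻ x in A, ENNReal.ofReal (nd σn (x - t)))
        = (Iic f).indicator (fun _ => (1:ℝ≥0∞)) y * (ENNReal.ofReal (nd σ2 (y - μ2)) *
            (ENNReal.ofReal (nd (Real.sqrt (σ1^2 - c^2/σ2^2)) (t - (μ1 + c/σ2^2*(y - μ2)))) *
              ∫⁻ x in A, ENNReal.ofReal (nd σn (x - t)))) := by
      intro t
      rw [ENNReal.ofReal_mul (nd_nonneg h2 _)]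
      ring
    simp_rw [e1]
    have hK : Measurable fun t => ENNReal.ofReal (nd (Real.sqrt (σ1^2 - c^2/σ2^2))
          (t - (μ1 + c/σ2^2*(y - μ2)))) * ∫⁻ x in A, ENNReal.ofReal (nd σn (x - t)) :=
      (by fun_prop :
        Measurable fun t => ENNReal.ofReal (nd (Real.sqrt (σ1^2 - c^2/σ2^2))
          (t - (μ1 + c/σ2^2*(y - μ2))))).mul hJ
    rw [lintegral_const_mul _ (hK.const_mul _),
      lintegral_const_mul _ hK,
      step_conv hs' hσn _ hA]
    have hsq : Real.sqrt (Real.sqrt (σ1^2 - c^2/σ2^2)^2 + σn^2)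
        = Real.sqrt (T^2 - c^2/σ2^2) := by
      rw [hs'2, hT2]; congr 1; ring
    rw [hsq]
    by_cases hy : y ∈ Iic f
    · rw [Set.indicator_of_mem hy, Set.indicator_of_mem hy, one_mul]
      rw [← lintegral_const_mul _ (by fun_prop :
        Measurable fun x => ENNReal.ofReal (nd (Real.sqrt (T^2 - c^2/σ2^2))
          (x - (μ1 + c/σ2^2*(y - μ2)))))]
      apply lintegral_congr
      intro x
      rw [← ENNReal.ofReal_mul (nd_nonneg h2 _)]
      congr 1
      rw [show x - (μ1 + c/σ2^2*(y - μ2)) = (x - μ1) - c/σ2^2*(y - μ2) by ring]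
      exact nd_refactor h2 hT hcT (y - μ2) (x - μ1)
    · rw [Set.indicator_of_notMem hy, Set.indicator_of_notMem hy, zero_mul]
  rw [lintegral_congr step5, lintegral_indicator measurableSet_Iic _]
  rw [lintegral_lintegral_swap (by
    apply Measurable.aemeasurable
    exact (by fun_prop : Measurable fun q : ℝ × ℝ => ENNReal.ofReal (nd T (q.2 - μ1) *
      nd (Real.sqrt (σ2^2 - c^2/T^2)) ((q.1 - μ2) - c/T^2*(q.2 - μ1)))))]
  apply lintegral_congr
  intro x
  simp_rw [ENNReal.ofReal_mul (nd_nonneg hT _)]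
  rw [lintegral_const_mul _ (by fun_prop :
    Measurable fun y => ENNReal.ofReal (nd (Real.sqrt (σ2^2 - c^2/T^2))
      ((y - μ2) - c/T^2*(x - μ1))))]
  have harg : ∀ y : ℝ, (y - μ2) - c/T^2*(x - μ1) = y - (c*(x - μ1)/T^2 + μ2) := by
    intro y; ring
  simp_rw [harg]
  rw [setLIntegral_nd hsn (c*(x - μ1)/T^2 + μ2) f]

lemma monotone_stdCdf : Monotone stdCdf := by
  intro a b hab
  exact setIntegral_mono_set integrable_stdPdf.integrableOn
    (ae_of_all _ fun u => stdPdf_nonneg u)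
    (HasSubset.Subset.eventuallyLE (Iic_subset_Iic.2 hab))

lemma measurable_stdCdf : Measurable stdCdf := monotone_stdCdf.measurable


end Aux

/-- Noisy-observation analogue of Lemma 1: if `(X, Y)` is bivariate normal with mean `(μm, μM)`
and covariance `[[σm², c], [c, σM²]]` and `ε ∼ N(0, σn²)` is independent of `(X, Y)`, then the
conditional distribution of `X + ε` given `{Y ≤ f_*}` has density
`x ↦ Φ((f_* − u_n(x))/s_n) φ((x − μm)/σ̃) / (σ̃ Φ((f_* − μM)/σM))`. -/
theorem lemma1_noisy {Ω : Type*} [MeasurableSpace Ω] (ℙ : Measure Ω) [IsProbabilityMeasure ℙ]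
    (X Y ε : Ω → ℝ) (μm μM σm σM c σn fstar : ℝ)
    (hσm : 0 < σm) (hσM : 0 < σM) (hσn : 0 < σn) (hc : c ^ 2 < σm ^ 2 * σM ^ 2)
    (hX : Measurable X) (hY : Measurable Y) (hε : Measurable ε)
    (hXY : Measure.map (fun ω => (X ω, Y ω)) ℙ =
      (volume : Measure (ℝ × ℝ)).withDensity
        (fun v => ENNReal.ofReal (bivDensity μm μM σm σM c v.1 v.2)))
    (hεlaw : Measure.map ε ℙ = ProbabilityTheory.gaussianReal 0 (σn ^ 2).toNNReal)
    (hindep : ProbabilityTheory.IndepFun (fun ω => (X ω, Y ω)) ε ℙ) :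
    ∀ A : Set ℝ, MeasurableSet A →
      ℙ {ω | X ω + ε ω ∈ A ∧ Y ω ≤ fstar} / ℙ {ω | Y ω ≤ fstar} =
        ENNReal.ofReal (∫ x in A,
          stdCdf ((fstar - condMeanNoisy μm μM σm σn c x) / condSdNoisy σm σM σn c) *
            stdPdf ((x - μm) / sigmaTilde σm σn) /
              (sigmaTilde σm σn * stdCdf ((fstar - μM) / σM))) := by
  intro A hA
  have hσT : (0:ℝ) < sigmaTilde σm σn := Real.sqrt_pos.2 (by positivity)
  have hmapprod : Measure.map (fun ω => ((X ω, Y ω), ε ω)) ℙ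
      = (Measure.map (fun ω => (X ω, Y ω)) ℙ).prod (Measure.map ε ℙ) :=
    (ProbabilityTheory.indepFun_iff_map_prod_eq_prod_map_map
      ((hX.prodMk hY).aemeasurable) hε.aemeasurable).1 hindep
  have hSm : MeasurableSet {q : (ℝ × ℝ) × ℝ | q.1.1 + q.2 ∈ A ∧ q.1.2 ≤ fstar} :=
    ((measurable_fst.fst.add measurable_snd) hA).inter (measurable_fst.snd measurableSet_Iic)
  have hNum0 : ℙ {ω | X ω + ε ω ∈ A ∧ Y ω ≤ fstar}
      = (Measure.map (fun ω => ((X ω, Y ω), ε ω)) ℙ)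
          {q : (ℝ × ℝ) × ℝ | q.1.1 + q.2 ∈ A ∧ q.1.2 ≤ fstar} := by
    rw [Measure.map_apply ((hX.prodMk hY).prodMk hε) hSm]
    rfl
  have hN : ℙ {ω | X ω + ε ω ∈ A ∧ Y ω ≤ fstar}
      = ∫⁻ x in A, ENNReal.ofReal (nd (sigmaTilde σm σn) (x - μm) *
          stdCdf ((fstar - condMeanNoisy μm μM σm σn c x) / condSdNoisy σm σM σn c)) := by
    rw [hNum0, hmapprod, hXY, hεlaw]
    exact num_lemma hσm hσM hσn hc μm μM fstar hA
  have hD : ℙ {ω | Y ω ≤ fstar} = ENNReal.ofReal (stdCdf ((fstar - μM)/σM)) := by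
    have hset : {ω | Y ω ≤ fstar} = (fun ω => (X ω, Y ω)) ⁻¹' {p : ℝ × ℝ | p.2 ≤ fstar} := rfl
    have hTm : MeasurableSet {p : ℝ × ℝ | p.2 ≤ fstar} := measurable_snd measurableSet_Iic
    rw [hset, ← Measure.map_apply (hX.prodMk hY) hTm, hXY,
      den_lemma hσm hσM hc μm μM fstar]
  have hgmeas : Measurable (fun x => nd (sigmaTilde σm σn) (x - μm) *
      stdCdf ((fstar - condMeanNoisy μm μM σm σn c x) / condSdNoisy σm σM σn c)) := by
    apply Measurable.mul
    · exact (measurable_nd _).comp (measurable_id.sub_const μm)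
    · apply measurable_stdCdf.comp
      apply Measurable.div_const
      apply Measurable.sub measurable_const
      exact (((measurable_id.sub_const μm).const_mul c).div_const _).add_const μM
  have hgnn : ∀ x : ℝ, 0 ≤ nd (sigmaTilde σm σn) (x - μm) *
      stdCdf ((fstar - condMeanNoisy μm μM σm σn c x) / condSdNoisy σm σM σn c) :=
    fun x => mul_nonneg (nd_nonneg hσT _) (stdCdf_nonneg _)
  have hgint : IntegrableOn (fun x => nd (sigmaTilde σm σn) (x - μm) *
      stdCdf ((fstar - condMeanNoisy μm μM σm σn c x) / condSdNoisy σm σM σn c)) A := by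
    apply Integrable.mono' ((integrable_nd hσT μm).restrict (s := A))
      hgmeas.aestronglyMeasurable
    apply ae_of_all
    intro x
    rw [Real.norm_eq_abs, abs_of_nonneg (hgnn x)]
    calc nd (sigmaTilde σm σn) (x - μm) *
        stdCdf ((fstar - condMeanNoisy μm μM σm σn c x) / condSdNoisy σm σM σn c)
        ≤ nd (sigmaTilde σm σn) (x - μm) * 1 :=
          mul_le_mul_of_nonneg_left (stdCdf_le_one _) (nd_nonneg hσT _)
      _ = nd (sigmaTilde σm σn) (x - μm) := mul_one _
  have hN2 : ℙ {ω | X ω + ε ω ∈ A ∧ Y ω ≤ fstar}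
      = ENNReal.ofReal (∫ x in A, nd (sigmaTilde σm σn) (x - μm) *
          stdCdf ((fstar - condMeanNoisy μm μM σm σn c x) / condSdNoisy σm σM σn c)) := by
    rw [hN, ← ofReal_integral_eq_lintegral_ofReal hgint (ae_of_all _ hgnn)]
  rw [hN2, hD, ← ENNReal.ofReal_div_of_pos (stdCdf_pos _)]
  congr 1
  have hfun : (fun x => stdCdf ((fstar - condMeanNoisy μm μM σm σn c x) / condSdNoisy σm σM σn c) *
        stdPdf ((x - μm) / sigmaTilde σm σn) / (sigmaTilde σm σn * stdCdf ((fstar - μM) / σM)))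
      = fun x => (nd (sigmaTilde σm σn) (x - μm) *
          stdCdf ((fstar - condMeanNoisy μm μM σm σn c x) / condSdNoisy σm σM σn c)) /
            stdCdf ((fstar - μM) / σM) := by
    funext x
    simp only [nd]
    ring
  rw [hfun, integral_div]
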